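/- The 5×5 parameter-free Bose-Hubbard metric Θ^(5)(γ) is positive definite for all γ in the open interval (0, γ_max) where γ_max = (1/2)√(√5 - 1). -/

import Mathlib

open Complex Matrix ComplexOrder

noncomputable def Theta5 (γ : ℝ) : Matrix (Fin 5) (Fin 5) ℂ :=
  !![1, 2 * I * γ, 0, 4 * I * γ ^ 3, 0;
     -(2 * I * γ), ((1 + 6 * γ ^ 2 : ℝ) : ℂ), I * Real.sqrt 6 * γ * (1 + 2 * (γ : ℂ) ^ 2),
       ((4 * γ ^ 4 : ℝ) : ℂ), 4 * I * γ ^ 3;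
     0, -(I * Real.sqrt 6 * γ * (1 + 2 * (γ : ℂ) ^ 2)), ((1 + 8 * γ ^ 2 + 8 * γ ^ 4 : ℝ) : ℂ),
       I * Real.sqrt 6 * γ * (1 + 2 * (γ : ℂ) ^ 2), 0;
     -(4 * I * γ ^ 3), ((4 * γ ^ 4 : ℝ) : ℂ), -(I * Real.sqrt 6 * γ * (1 + 2 * (γ : ℂ) ^ 2)),
       ((1 + 6 * γ ^ 2 : ℝ) : ℂ), 2 * I * γ;
     0, -(4 * I * γ ^ 3), 0, -(2 * I * γ), 1]

noncomputable def Bmat (γ : ℝ) : Matrix (Fin 5) (Fin 5) ℂ :=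
  !![1, 0, 0, 0, 0;
     -(2 * I * γ), -(I * (1 + 2 * (γ : ℂ) ^ 2)), 0, 0, 0;
     0, -(Real.sqrt 6 * γ * (1 + 2 * (γ : ℂ) ^ 2)), -(1 + 2 * (γ : ℂ) ^ 2 - 4 * (γ : ℂ) ^ 4), 0, 0;
     -(4 * I * γ ^ 3), 4 * I * γ ^ 4,
       I * Real.sqrt 6 * γ * (1 + 2 * (γ : ℂ) ^ 2 - 4 * (γ : ℂ) ^ 4), I, 0;
     0, -(4 * (γ : ℂ) ^ 3), 4 * Real.sqrt 6 * (γ : ℂ) ^ 4, 2 * γ, 1]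

noncomputable def dvec (γ : ℝ) : Fin 5 → ℝ :=
  ![(1 + 2 * γ ^ 2) * (1 + 2 * γ ^ 2 - 4 * γ ^ 4),
    1 + 2 * γ ^ 2 - 4 * γ ^ 4,
    1 + 2 * γ ^ 2,
    (1 + 2 * γ ^ 2 - 4 * γ ^ 4) * ((1 + 4 * γ ^ 2) * (1 - 2 * γ ^ 2 - 4 * γ ^ 4)),
    (1 + 2 * γ ^ 2) * ((1 - 2 * γ ^ 2 - 4 * γ ^ 4) * (1 - 8 * γ ^ 4 + 32 * γ ^ 6))]

lemma posDef_mul_diag {n : Type*} [Fintype n] [DecidableEq n] {D B : Matrix n n ℂ}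
    (hD : D.PosDef) (hB : IsUnit B.det) : (B * D * Bᴴ).PosDef := by
  refine Matrix.PosDef.of_dotProduct_mulVec_pos (hD.posSemidef.mul_mul_conjTranspose_same B).isHermitian fun x hx => ?_
  have hdet : IsUnit (Bᴴ).det := by
    rw [Matrix.det_conjTranspose]
    exact hB.star
  have hBH : Function.Injective (Bᴴ).mulVec := Matrix.mulVec_injective_iff_isUnit.mpr ((Matrix.isUnit_iff_isUnit_det _).mpr hdet)
  have hy : Bᴴ *ᵥ x ≠ 0 := by
    intro h
    exact hx (hBH (by simpa using h))
  have h2 := hD.dotProduct_mulVec_pos hy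
  have e : B * D * Bᴴ = (Bᴴ)ᴴ * D * Bᴴ := by rw [conjTranspose_conjTranspose]
  rw [e]
  simpa only [star_mulVec, dotProduct_mulVec, vecMul_vecMul] using h2

lemma tri (B : Matrix (Fin 5) (Fin 5) ℂ) (d : Fin 5 → ℂ) (i j : Fin 5) :
    (B * Matrix.diagonal d * Bᴴ) i j = ∑ k, B i k * d k * star (B j k) := by
  rw [Matrix.mul_apply]
  simp only [Matrix.mul_diagonal, Matrix.conjTranspose_apply]

set_option maxHeartbeats 4000000 in
theorem stmt17 (γ : ℝ) (h1 : 0 < γ) (h2 : γ < 1 / 2 * Real.sqrt (Real.sqrt 5 - 1)) :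
    (Theta5 γ).PosDef := by
  have h5 : Real.sqrt 5 ^ 2 = 5 := Real.sq_sqrt (by norm_num)
  have h5' : (2 : ℝ) ≤ Real.sqrt 5 := by nlinarith [Real.sqrt_nonneg 5]
  have hsub : (0 : ℝ) ≤ Real.sqrt 5 - 1 := by linarith
  have hsq : Real.sqrt (Real.sqrt 5 - 1) ^ 2 = Real.sqrt 5 - 1 := Real.sq_sqrt hsub
  have h3 : 0 < 1 / 2 * Real.sqrt (Real.sqrt 5 - 1) + γ := by positivity
  have hγ2 : γ ^ 2 < (Real.sqrt 5 - 1) / 4 := by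
    nlinarith [mul_pos (sub_pos.mpr h2) h3]
  have hkey : 2 * γ ^ 2 + 4 * γ ^ 4 < 1 := by
    nlinarith [mul_pos (sub_pos.mpr hγ2)
      (show (0 : ℝ) < γ ^ 2 + (Real.sqrt 5 + 1) / 4 by positivity)]
  have hp1 : (0 : ℝ) < 1 + 2 * γ ^ 2 := by positivity
  have hp2 : (0 : ℝ) < 1 + 2 * γ ^ 2 - 4 * γ ^ 4 := by nlinarith [sq_nonneg γ]
  have hr : (0 : ℝ) < 1 - 2 * γ ^ 2 - 4 * γ ^ 4 := by linarith
  have hq3 : (0 : ℝ) < 1 + 4 * γ ^ 2 := by positivity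
  have hq4 : (0 : ℝ) < 1 - 8 * γ ^ 4 + 32 * γ ^ 6 := by
    nlinarith [mul_nonneg (sq_nonneg (γ ^ 2 - 1 / 6))
      (le_of_lt (show (0 : ℝ) < γ ^ 2 + 1 / 12 by positivity))]
  have hs : ((Real.sqrt 6 : ℝ) : ℂ) ^ 2 = 6 := by
    rw [← Complex.ofReal_pow, Real.sq_sqrt (by norm_num : (6:ℝ) ≥ 0)]
    norm_num
  -- the scalar we clear denominators with
  have hcpos : 0 < (1 + 2 * γ ^ 2) * (1 + 2 * γ ^ 2 - 4 * γ ^ 4) := mul_pos hp1 hp2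
  have hc0 : (((1 + 2 * γ ^ 2) * (1 + 2 * γ ^ 2 - 4 * γ ^ 4) : ℝ) : ℂ) ≠ 0 := by
    exact_mod_cast hcpos.ne'
  -- main algebraic identity
  have hmain : (((1 + 2 * γ ^ 2) * (1 + 2 * γ ^ 2 - 4 * γ ^ 4) : ℝ) : ℂ) • Theta5 γ =
      Bmat γ * Matrix.diagonal (fun k => ((dvec γ k : ℝ) : ℂ)) * (Bmat γ)ᴴ := by
    ext i j
    fin_cases i <;> fin_cases j <;>
      rw [Matrix.smul_apply, tri, Fin.sum_univ_five] <;>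
      simp only [Theta5, Bmat, dvec, Matrix.of_apply, smul_eq_mul,
        Matrix.cons_val', Matrix.cons_val_zero, Matrix.cons_val_one, Matrix.head_cons,
        Matrix.empty_val', Matrix.cons_val_fin_one, Matrix.head_fin_const,
        Matrix.cons_val_two, Matrix.cons_val_three, Matrix.cons_val_four, Matrix.tail_cons,
        smul_eq_mul, star_neg, star_mul', star_one, star_zero, RCLike.star_def,
        _root_.map_mul, _root_.map_add, _root_.map_sub, _root_.map_neg, _root_.map_one, _root_.map_zero, _root_.map_pow, _root_.map_ofNat,
        Complex.conj_I, Complex.conj_ofReal, Fin.mk_zero, Fin.mk_one, Fin.isValue, Fin.reduceFinMk]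
    · push_cast; ring
    · push_cast; ring
    · push_cast; ring
    · push_cast; ring
    · push_cast; ring
    · push_cast; ring
    · push_cast; linear_combination ((1) + (10)*(γ:ℂ)^2 + (24)*(γ:ℂ)^4 + (-8)*(γ:ℂ)^6 + (-48)*(γ:ℂ)^8) * Complex.I_sq
    · push_cast; ring
    · push_cast; linear_combination ((4)*(γ:ℂ)^4 + (16)*(γ:ℂ)^6 + (-32)*(γ:ℂ)^10) * Complex.I_sq
    · push_cast; ring
    · push_cast; ring
    · push_cast; ring
    · push_cast; linear_combination ((-1)*(γ:ℂ)^2 + (-6)*(γ:ℂ)^4 + (-8)*(γ:ℂ)^6 + (8)*(γ:ℂ)^8 + (16)*(γ:ℂ)^10) * hs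
    · push_cast; ring
    · push_cast; ring
    · push_cast; ring
    · push_cast; linear_combination ((4)*(γ:ℂ)^4 + (16)*(γ:ℂ)^6 + (-32)*(γ:ℂ)^10) * Complex.I_sq
    · push_cast; ring
    · push_cast; linear_combination ((-1)*(γ:ℂ)^2 + (-6)*(γ:ℂ)^4 + (-4)*(γ:ℂ)^6 + (24)*(γ:ℂ)^8 + (16)*(γ:ℂ)^10 + (-32)*(γ:ℂ)^12) * hs + ((1) + (4)*(γ:ℂ)^2 + (γ:ℂ)^2*((Real.sqrt 6:ℝ):ℂ)^2 + (-12)*(γ:ℂ)^4 + (6)*(γ:ℂ)^4*((Real.sqrt 6:ℝ):ℂ)^2 + (-32)*(γ:ℂ)^6 + (4)*(γ:ℂ)^6*((Real.sqrt 6:ℝ):ℂ)^2 + (96)*(γ:ℂ)^8 + (-24)*(γ:ℂ)^8*((Real.sqrt 6:ℝ):ℂ)^2 + (96)*(γ:ℂ)^10 + (-16)*(γ:ℂ)^10*((Real.sqrt 6:ℝ):ℂ)^2 + (-192)*(γ:ℂ)^12 + (32)*(γ:ℂ)^12*((Real.sqrt 6:ℝ):ℂ)^2) * Complex.I_sq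
    · push_cast; linear_combination ((-4)*(γ:ℂ)^5*Complex.I + (-16)*(γ:ℂ)^7*Complex.I + (32)*(γ:ℂ)^11*Complex.I) * hs
    · push_cast; ring
    · push_cast; ring
    · push_cast; ring
    · push_cast; linear_combination ((4)*(γ:ℂ)^5*Complex.I + (16)*(γ:ℂ)^7*Complex.I + (-32)*(γ:ℂ)^11*Complex.I) * hs
    · push_cast; linear_combination ((-16)*(γ:ℂ)^8 + (-32)*(γ:ℂ)^10) * hs
  -- rewrite Theta5 as a congruence
  have hT : Theta5 γ =
      Bmat γ * Matrix.diagonal (fun k => ((((1 + 2 * γ ^ 2) * (1 + 2 * γ ^ 2 - 4 * γ ^ 4) : ℝ) : ℂ))⁻¹ * ((dvec γ k : ℝ) : ℂ)) * (Bmat γ)ᴴ := by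
    have : Matrix.diagonal (fun k => ((((1 + 2 * γ ^ 2) * (1 + 2 * γ ^ 2 - 4 * γ ^ 4) : ℝ) : ℂ))⁻¹ * ((dvec γ k : ℝ) : ℂ)) =
        ((((1 + 2 * γ ^ 2) * (1 + 2 * γ ^ 2 - 4 * γ ^ 4) : ℝ) : ℂ))⁻¹ • Matrix.diagonal (fun k => ((dvec γ k : ℝ) : ℂ)) := by
      rw [← Matrix.diagonal_smul]
      rfl
    rw [this, Matrix.mul_smul, Matrix.smul_mul, ← hmain, smul_smul,
      inv_mul_cancel₀ hc0, one_smul]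
  rw [hT]
  apply posDef_mul_diag
  · rw [Matrix.posDef_diagonal_iff]
    intro k
    have hd : 0 < dvec γ k := by
      fin_cases k <;>
        simp only [dvec, Fin.isValue, Fin.reduceFinMk, Fin.mk_zero, Fin.mk_one,
          Matrix.cons_val_zero, Matrix.cons_val_one, Matrix.head_cons, Matrix.cons_val_two,
          Matrix.cons_val_three, Matrix.cons_val_four, Matrix.tail_cons]
      · exact mul_pos hp1 hp2
      · exact hp2
      · exact hp1
      · exact mul_pos hp2 (mul_pos hq3 hr)
      · exact mul_pos hp1 (mul_pos hr hq4)
    have heq : ((((1 + 2 * γ ^ 2) * (1 + 2 * γ ^ 2 - 4 * γ ^ 4) : ℝ) : ℂ))⁻¹ * ((dvec γ k : ℝ) : ℂ) = (((((1 + 2 * γ ^ 2) * (1 + 2 * γ ^ 2 - 4 * γ ^ 4))⁻¹ * dvec γ k : ℝ)) : ℂ) := by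
      push_cast; ring
    rw [heq, Complex.zero_lt_real]
    exact mul_pos (inv_pos.mpr hcpos) hd
  · rw [isUnit_iff_ne_zero]
    have hlt : (Bmat γ).BlockTriangular OrderDual.toDual := by
      intro i j hij
      have hij' : i < j := by simpa using hij
      fin_cases i <;> fin_cases j <;>
        first
          | exact absurd hij' (by decide)
          | simp [Bmat, Fin.isValue, Fin.reduceFinMk, Fin.mk_zero, Fin.mk_one]
    rw [Matrix.det_of_lowerTriangular _ hlt, Fin.prod_univ_five]
    simp only [Bmat, Matrix.cons_val', Matrix.cons_val_zero, Matrix.cons_val_one,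
      Matrix.head_cons, Matrix.cons_val_two, Matrix.cons_val_three, Matrix.cons_val_four,
      Matrix.tail_cons, Matrix.empty_val', Matrix.cons_val_fin_one, Matrix.head_fin_const]
    have e1 : (1 + 2 * (γ : ℂ) ^ 2) ≠ 0 := by
      have h' : ((1 + 2 * γ ^ 2 : ℝ) : ℂ) ≠ 0 := by exact_mod_cast hp1.ne'
      push_cast at h'
      exact h'
    have e2 : (1 + 2 * (γ : ℂ) ^ 2 - 4 * (γ : ℂ) ^ 4) ≠ 0 := by
      have h' : ((1 + 2 * γ ^ 2 - 4 * γ ^ 4 : ℝ) : ℂ) ≠ 0 := by exact_mod_cast hp2.ne'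
      push_cast at h'
      exact h'
    simp [Complex.I_ne_zero, e1, e2]
    intro h
    exact e2 (by linear_combination -h)
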